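/- Let G be a connected weighted graph, let i ≠ j be vertices, and let G' be the weighted graph obtained from G by replacing the edge weight λ_{ij} with a new weight λ'_{ij} satisfying λ_{ij} < λ'_{ij} ≤ 0 (all other weights unchanged). Then the largest root of μ(G) is strictly greater than the largest root of μ(G'). -/

import Mathlib

open Polynomial
open scoped Classical

/-- A matching of the weighted graph with edge weights `lam`, inside the vertex set `A`:
a set of pairs `(j,k)` with `j < k`, `lam j k ≠ 0`, endpoints in `A`,
no two pairs sharing a vertex. -/
def IsMatching {n : ℕ} (lam : Fin n → Fin n → ℝ) (A : Finset (Fin n))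
    (M : Finset (Fin n × Fin n)) : Prop :=
  (∀ e ∈ M, e.1 < e.2 ∧ lam e.1 e.2 ≠ 0 ∧ e.1 ∈ A ∧ e.2 ∈ A) ∧
  ∀ e ∈ M, ∀ f ∈ M, e ≠ f → e.1 ≠ f.1 ∧ e.1 ≠ f.2 ∧ e.2 ≠ f.1 ∧ e.2 ≠ f.2

/-- The vertices covered by a matching. -/
def mVerts {n : ℕ} (M : Finset (Fin n × Fin n)) : Finset (Fin n) :=
  M.image Prod.fst ∪ M.image Prod.snd

/-- The finite set of matchings inside the vertex set `A`. -/
noncomputable def matchings {n : ℕ} (lam : Fin n → Fin n → ℝ) (A : Finset (Fin n)) :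
    Finset (Finset (Fin n × Fin n)) :=
  Finset.univ.filter fun M => IsMatching lam A M

/-- The weighted matching polynomial of the induced weighted subgraph on the vertex set `A`
(the matching polynomial of the empty graph is `1`). -/
noncomputable def mu {n : ℕ} (r : Fin n → ℝ) (lam : Fin n → Fin n → ℝ)
    (A : Finset (Fin n)) : Polynomial ℝ :=
  ∑ M ∈ matchings lam A,
    (∏ i ∈ A \ mVerts M, (X - C (r i))) * C (∏ e ∈ M, lam e.1 e.2)

/-- The multivariate matching polynomial evaluated at the complex numbers `x 1, …, x n`. -/
noncomputable def muC {n : ℕ} (lam : Fin n → Fin n → ℝ) (x : Fin n → ℂ) : ℂ :=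
  ∑ M ∈ matchings lam (Finset.univ : Finset (Fin n)),
    (∏ i ∈ Finset.univ \ mVerts M, x i) * ∏ e ∈ M, (lam e.1 e.2 : ℂ)

/-- The constant `B_G`: for `n ≥ 3` the maximum over vertices `j` and sets
`A ⊆ [n] ∖ {j}` with `|A| = n - 2` of `∑_{k ∈ A} (-λ_{jk})`; `-λ_{12}/4` for `n = 2`;
`0` for `n = 1`. -/
noncomputable def BG (n : ℕ) (lam : Fin n → Fin n → ℝ) : ℝ :=
  if 3 ≤ n then
    sSup {S : ℝ | ∃ j : Fin n, ∃ A : Finset (Fin n),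
      j ∉ A ∧ A.card = n - 2 ∧ S = ∑ k ∈ A, -lam j k}
  else if h : n = 2 then -lam ⟨0, by omega⟩ ⟨1, by omega⟩ / 4
  else 0

/-- `l` is a path from `i` to `j` inside the vertex set `A`: a nonempty list of distinct
vertices of `A`, starting at `i`, ending at `j`, with consecutive vertices joined by
edges of nonzero weight. -/
def IsPathIn {n : ℕ} (lam : Fin n → Fin n → ℝ) (A : Finset (Fin n)) (i j : Fin n)
    (l : List (Fin n)) : Prop :=
  l ≠ [] ∧ l.Nodup ∧ (∀ v ∈ l, v ∈ A) ∧ l.head? = some i ∧ l.getLast? = some j ∧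
    l.Chain' fun u v => lam u v ≠ 0

/-- `λ_c`: the product of `-λ_e` over the edges `e` of the path `c` (equal to `1` for a
trivial path). -/
def pathWeight {n : ℕ} (lam : Fin n → Fin n → ℝ) (l : List (Fin n)) : ℝ :=
  ((l.zip l.tail).map fun p => -lam p.1 p.2).prod

/-- A real polynomial viewed as a rational function. -/
noncomputable def toRF (p : Polynomial ℝ) : RatFunc ℝ :=
  algebraMap (Polynomial ℝ) (RatFunc ℝ) p

/-- The graph continued fraction `α_v = μ(A)/μ(A ∖ v)` as a rational function. -/
noncomputable def alpha {n : ℕ} (r : Fin n → ℝ) (lam : Fin n → Fin n → ℝ) (v : Fin n)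
    (A : Finset (Fin n)) : RatFunc ℝ :=
  toRF (mu r lam A) / toRF (mu r lam (A.erase v))

/-- `λ_{i∼j} = -(∑_{c ∈ [i→j]} λ_c · μ(A∖c)²) / μ(A∖{i,j})²` as a rational function. -/
noncomputable def lamSim {n : ℕ} (r : Fin n → ℝ) (lam : Fin n → Fin n → ℝ) (i j : Fin n)
    (A : Finset (Fin n)) : RatFunc ℝ :=
  -(∑ᶠ l ∈ {l : List (Fin n) | IsPathIn lam A i j l},
      toRF (C (pathWeight lam l) * mu r lam (A \ l.toFinset) ^ 2)) /
    toRF (mu r lam ((A.erase i).erase j)) ^ 2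

/-- The value of a rational function at `θ`, taken after cancelling common factors;
`none` encodes the value `∞` (a pole). -/
noncomputable def valAt (f : RatFunc ℝ) (θ : ℝ) : Option ℝ :=
  if f.denom.eval θ = 0 then none else some (f.num.eval θ / f.denom.eval θ)

/-- The set `0_{θ,A}` of θ-essential vertices: `m_θ(A∖v) = m_θ(A) - 1`. -/
def zeroSet {n : ℕ} (r : Fin n → ℝ) (lam : Fin n → Fin n → ℝ) (θ : ℝ)
    (A : Finset (Fin n)) : Set (Fin n) :=
  {v | v ∈ A ∧
    (mu r lam A).rootMultiplicity θ = (mu r lam (A.erase v)).rootMultiplicity θ + 1}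

/-- The set `∞_{θ,A}`: `m_θ(A∖v) = m_θ(A) + 1`. -/
def infSet {n : ℕ} (r : Fin n → ℝ) (lam : Fin n → Fin n → ℝ) (θ : ℝ)
    (A : Finset (Fin n)) : Set (Fin n) :=
  {v | v ∈ A ∧
    (mu r lam (A.erase v)).rootMultiplicity θ = (mu r lam A).rootMultiplicity θ + 1}

/-- The set `+_{θ,A}`: `m_θ(A∖v) = m_θ(A)` and `α_v(A)(θ) > 0`. -/
def plusSet {n : ℕ} (r : Fin n → ℝ) (lam : Fin n → Fin n → ℝ) (θ : ℝ)
    (A : Finset (Fin n)) : Set (Fin n) :=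
  {v | v ∈ A ∧
    (mu r lam (A.erase v)).rootMultiplicity θ = (mu r lam A).rootMultiplicity θ ∧
    ∃ t : ℝ, valAt (alpha r lam v A) θ = some t ∧ 0 < t}

/-- The set `−_{θ,A}`: `m_θ(A∖v) = m_θ(A)` and `α_v(A)(θ) < 0`. -/
def minusSet {n : ℕ} (r : Fin n → ℝ) (lam : Fin n → Fin n → ℝ) (θ : ℝ)
    (A : Finset (Fin n)) : Set (Fin n) :=
  {v | v ∈ A ∧
    (mu r lam (A.erase v)).rootMultiplicity θ = (mu r lam A).rootMultiplicity θ ∧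
    ∃ t : ℝ, valAt (alpha r lam v A) θ = some t ∧ t < 0}

/-- The frontier `∂0_{θ,A}`: vertices not in `0_{θ,A}` with a neighbor in `0_{θ,A}`. -/
def frontierZero {n : ℕ} (r : Fin n → ℝ) (lam : Fin n → Fin n → ℝ) (θ : ℝ)
    (A : Finset (Fin n)) : Set (Fin n) :=
  {v | v ∈ A ∧ v ∉ zeroSet r lam θ A ∧ ∃ w ∈ zeroSet r lam θ A, lam v w ≠ 0}

/-- The underlying simple graph: edges are the pairs with nonzero edge weight. -/
def wGraph {n : ℕ} (lam : Fin n → Fin n → ℝ) : SimpleGraph (Fin n) :=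
  SimpleGraph.fromRel fun j k => lam j k ≠ 0

namespace Stmt19
open Finset
variable {n : ℕ}

lemma mem_matchings {lam : Fin n → Fin n → ℝ} {A : Finset (Fin n)}
    {M : Finset (Fin n × Fin n)} : M ∈ matchings lam A ↔ IsMatching lam A M := by
  simp [matchings]

lemma isMatching_empty (lam : Fin n → Fin n → ℝ) (A : Finset (Fin n)) :
    IsMatching lam A (∅ : Finset (Fin n × Fin n)) := by
  constructor <;> intro e he <;> simp at he

lemma mem_mVerts {M : Finset (Fin n × Fin n)} {v : Fin n} :
    v ∈ mVerts M ↔ ∃ e ∈ M, e.1 = v ∨ e.2 = v := by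
  simp only [mVerts, Finset.mem_union, Finset.mem_image]
  constructor
  · rintro (⟨e, he, rfl⟩ | ⟨e, he, rfl⟩)
    · exact ⟨e, he, Or.inl rfl⟩
    · exact ⟨e, he, Or.inr rfl⟩
  · rintro ⟨e, he, rfl | rfl⟩
    · exact Or.inl ⟨e, he, rfl⟩
    · exact Or.inr ⟨e, he, rfl⟩

lemma mVerts_subset {lam : Fin n → Fin n → ℝ} {A : Finset (Fin n)}
    {M : Finset (Fin n × Fin n)} (h : IsMatching lam A M) : mVerts M ⊆ A := by
  intro v hv
  rw [mem_mVerts] at hv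
  obtain ⟨e, he, h1 | h2⟩ := hv
  · exact h1 ▸ (h.1 e he).2.2.1
  · exact h2 ▸ (h.1 e he).2.2.2

lemma matchings_empty (lam : Fin n → Fin n → ℝ) :
    matchings lam (∅ : Finset (Fin n)) = {∅} := by
  ext M
  simp only [mem_matchings, Finset.mem_singleton]
  constructor
  · intro h
    ext e
    simp only [Finset.notMem_empty, iff_false]
    intro he
    exact absurd ((h.1 e he).2.2.1) (by simp)
  · rintro rfl; exact isMatching_empty _ _

lemma mu_empty (r : Fin n → ℝ) (lam : Fin n → Fin n → ℝ) :
    mu r lam (∅ : Finset (Fin n)) = 1 := by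
  simp [mu, matchings_empty, mVerts]

lemma matchings_congr {lam lam' : Fin n → Fin n → ℝ} {A : Finset (Fin n)}
    (h : ∀ a ∈ A, ∀ b ∈ A, a < b → lam a b = lam' a b) :
    matchings lam A = matchings lam' A := by
  ext M
  simp only [mem_matchings, IsMatching]
  constructor <;> intro ⟨h1, h2⟩ <;> refine ⟨fun e he => ?_, h2⟩
  · obtain ⟨hlt, hne, ha, hb⟩ := h1 e he
    exact ⟨hlt, by rw [← h e.1 ha e.2 hb hlt]; exact hne, ha, hb⟩
  · obtain ⟨hlt, hne, ha, hb⟩ := h1 e he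
    exact ⟨hlt, by rw [h e.1 ha e.2 hb hlt]; exact hne, ha, hb⟩

lemma mu_congr (r : Fin n → ℝ) {lam lam' : Fin n → Fin n → ℝ} {A : Finset (Fin n)}
    (h : ∀ a ∈ A, ∀ b ∈ A, a < b → lam a b = lam' a b) :
    mu r lam A = mu r lam' A := by
  unfold mu
  rw [← matchings_congr h]
  refine Finset.sum_congr rfl fun M hM => ?_
  rw [mem_matchings] at hM
  congr 2
  exact Finset.prod_congr rfl fun e he =>
    h e.1 ((hM.1 e he).2.2.1) e.2 ((hM.1 e he).2.2.2) ((hM.1 e he).1)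

lemma mu_eq_add (r : Fin n → ℝ) (lam : Fin n → Fin n → ℝ) (A : Finset (Fin n)) :
    mu r lam A = (∏ i ∈ A, (X - C (r i))) +
      ∑ M ∈ (matchings lam A).erase ∅,
        (∏ i ∈ A \ mVerts M, (X - C (r i))) * C (∏ e ∈ M, lam e.1 e.2) := by
  rw [mu, ← Finset.add_sum_erase _ _ (mem_matchings.2 (isMatching_empty lam A))]
  simp [mVerts]

lemma degree_term_lt {lam : Fin n → Fin n → ℝ} {A : Finset (Fin n)} (r : Fin n → ℝ)
    {M : Finset (Fin n × Fin n)} (hM : M ∈ (matchings lam A).erase ∅) :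
    ((∏ i ∈ A \ mVerts M, (X - C (r i))) * C (∏ e ∈ M, lam e.1 e.2)).degree
      < (A.card : WithBot ℕ) := by
  obtain ⟨hne, hM⟩ := Finset.mem_erase.1 hM
  rw [mem_matchings] at hM
  have hsub : mVerts M ⊆ A := mVerts_subset hM
  have hnonempty : (mVerts M).Nonempty := by
    obtain ⟨e, he⟩ := Finset.nonempty_iff_ne_empty.2 hne
    exact ⟨e.1, mem_mVerts.2 ⟨e, he, Or.inl rfl⟩⟩
  have hcard : (A \ mVerts M).card < A.card := by
    rw [Finset.card_sdiff_of_subset hsub]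
    have h1 : 1 ≤ (mVerts M).card := Finset.card_pos.2 hnonempty
    have h2 : (mVerts M).card ≤ A.card := Finset.card_le_card hsub
    omega
  calc ((∏ i ∈ A \ mVerts M, (X - C (r i))) * C (∏ e ∈ M, lam e.1 e.2)).degree
      ≤ (∏ i ∈ A \ mVerts M, (X - C (r i))).degree + (C (∏ e ∈ M, lam e.1 e.2)).degree :=
        Polynomial.degree_mul_le _ _
    _ ≤ (∏ i ∈ A \ mVerts M, (X - C (r i))).degree + 0 := by
        gcongr; exact Polynomial.degree_C_le
    _ = ((A \ mVerts M).card : WithBot ℕ) := by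
        rw [add_zero, Polynomial.degree_prod]
        simp [Polynomial.degree_X_sub_C]
    _ < (A.card : WithBot ℕ) := by exact_mod_cast hcard

lemma degree_sum_lt (r : Fin n → ℝ) (lam : Fin n → Fin n → ℝ) (A : Finset (Fin n)) :
    (∑ M ∈ (matchings lam A).erase ∅,
        (∏ i ∈ A \ mVerts M, (X - C (r i))) * C (∏ e ∈ M, lam e.1 e.2)).degree
      < (A.card : WithBot ℕ) := by
  refine lt_of_le_of_lt (Polynomial.degree_sum_le _ _) ?_
  rw [Finset.sup_lt_iff (by exact_mod_cast WithBot.bot_lt_coe _)]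
  exact fun M hM => degree_term_lt r hM

lemma mu_monic (r : Fin n → ℝ) (lam : Fin n → Fin n → ℝ) (A : Finset (Fin n)) :
    (mu r lam A).Monic := by
  rw [mu_eq_add]
  refine (Polynomial.monic_prod_of_monic _ _ fun i _ => Polynomial.monic_X_sub_C _).add_of_left ?_
  rw [Polynomial.degree_prod]
  simpa [Polynomial.degree_X_sub_C] using degree_sum_lt r lam A

lemma mu_degree (r : Fin n → ℝ) (lam : Fin n → Fin n → ℝ) (A : Finset (Fin n)) :
    (mu r lam A).degree = (A.card : WithBot ℕ) := by
  rw [mu_eq_add]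
  rw [Polynomial.degree_add_eq_left_of_degree_lt]
  · rw [Polynomial.degree_prod]; simp [Polynomial.degree_X_sub_C]
  · rw [Polynomial.degree_prod]
    simpa [Polynomial.degree_X_sub_C] using degree_sum_lt r lam A

end Stmt19

namespace Stmt19
open Finset
variable {n : ℕ}

/-- `lam` with the (symmetric) entry at `(a,b)` replaced by `0`. -/
def zeroAt (lam : Fin n → Fin n → ℝ) (a b : Fin n) : Fin n → Fin n → ℝ :=
  fun x y => if (x = a ∧ y = b) ∨ (x = b ∧ y = a) then 0 else lam x y

lemma zeroAt_apply_of_ne {lam : Fin n → Fin n → ℝ} {a b x y : Fin n}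
    (h : ¬((x = a ∧ y = b) ∨ (x = b ∧ y = a))) : zeroAt lam a b x y = lam x y := by
  simp [zeroAt, h]

lemma zeroAt_apply_ab (lam : Fin n → Fin n → ℝ) (a b : Fin n) :
    zeroAt lam a b a b = 0 := by simp [zeroAt]

lemma edge_split (r : Fin n → ℝ) (lam : Fin n → Fin n → ℝ) {A : Finset (Fin n)}
    {a b : Fin n} (hab : a < b) (ha : a ∈ A) (hb : b ∈ A) :
    mu r lam A = mu r (zeroAt lam a b) A
      + C (lam a b) * mu r lam ((A.erase a).erase b) := by
  have hcongr : ∀ x ∈ A, ∀ y ∈ A, x < y → x ≠ a ∨ y ≠ b →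
      zeroAt lam a b x y = lam x y := by
    intro x _ y _ hxy h
    apply zeroAt_apply_of_ne
    rintro (⟨rfl, rfl⟩ | ⟨rfl, rfl⟩)
    · rcases h with h | h <;> exact h rfl
    · exact absurd (hxy.trans hab) (lt_irrefl _)
  by_cases h0 : lam a b = 0
  · have he : mu r (zeroAt lam a b) A = mu r lam A := by
      refine mu_congr r fun x hx y hy hxy => ?_
      by_cases hxa : x = a ∧ y = b
      · obtain ⟨rfl, rfl⟩ := hxa; simp [zeroAt, h0]
      · refine hcongr x hx y hy hxy ?_
        by_contra hc
        push_neg at hc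
        exact hxa ⟨hc.1, hc.2⟩
    rw [he, h0]
    simp
  -- main case
  rw [mu, ← Finset.sum_filter_add_sum_filter_not (matchings lam A) (fun M => (a, b) ∈ M)]
  have hA'' : ∀ x ∈ (A.erase a).erase b, x ∈ A ∧ x ≠ a ∧ x ≠ b := by
    intro x hx
    simp only [Finset.mem_erase] at hx
    exact ⟨hx.2.2, hx.2.1, hx.1⟩
  have h2 : ∑ M ∈ (matchings lam A).filter (fun M => (a, b) ∈ M),
      (∏ i ∈ A \ mVerts M, (X - C (r i))) * C (∏ e ∈ M, lam e.1 e.2)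
      = C (lam a b) * mu r lam ((A.erase a).erase b) := by
    rw [mu, Finset.mul_sum]
    refine Finset.sum_bij' (fun M _ => M.erase (a, b)) (fun M' _ => insert (a, b) M')
      ?_ ?_ ?_ ?_ ?_
    · -- hi
      intro M hM
      rw [Finset.mem_filter, mem_matchings] at hM
      obtain ⟨⟨hM1, hM2⟩, habM⟩ := hM
      rw [mem_matchings]
      constructor
      · intro e he
        rw [Finset.mem_erase] at he
        obtain ⟨hne, heM⟩ := he
        obtain ⟨hlt, hl, h1, h2⟩ := hM1 e heM
        obtain ⟨d1, d2, d3, d4⟩ := hM2 e heM (a, b) habM hne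
        simp only [Finset.mem_erase]
        exact ⟨hlt, hl, ⟨d2, d1, h1⟩, ⟨d4, d3, h2⟩⟩
      · intro e he f hf hef
        rw [Finset.mem_erase] at he hf
        exact hM2 e he.2 f hf.2 hef
    · -- hj
      intro M' hM'
      rw [mem_matchings] at hM'
      obtain ⟨hM1, hM2⟩ := hM'
      rw [Finset.mem_filter, mem_matchings]
      refine ⟨⟨?_, ?_⟩, Finset.mem_insert_self _ _⟩
      · intro e he
        rcases Finset.mem_insert.1 he with rfl | heM
        · exact ⟨hab, h0, ha, hb⟩
        · obtain ⟨hlt, hl, h1, h2⟩ := hM1 e heM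
          exact ⟨hlt, hl, (hA'' _ h1).1, (hA'' _ h2).1⟩
      · intro e he f hf hef
        rcases Finset.mem_insert.1 he with rfl | heM <;>
          rcases Finset.mem_insert.1 hf with rfl | hfM
        · exact absurd rfl hef
        · obtain ⟨hlt, hl, h1, h2⟩ := hM1 f hfM
          have q1 := hA'' _ h1
          have q2 := hA'' _ h2
          exact ⟨Ne.symm q1.2.1, Ne.symm q2.2.1, Ne.symm q1.2.2, Ne.symm q2.2.2⟩
        · obtain ⟨hlt, hl, h1, h2⟩ := hM1 e heM
          have q1 := hA'' _ h1
          have q2 := hA'' _ h2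
          exact ⟨q1.2.1, q1.2.2, q2.2.1, q2.2.2⟩
        · exact hM2 e heM f hfM hef
    · -- left_inv
      intro M hM
      rw [Finset.mem_filter] at hM
      exact Finset.insert_erase hM.2
    · -- right_inv
      intro M' hM'
      rw [mem_matchings] at hM'
      apply Finset.erase_insert
      intro habM'
      have := (hM'.1 _ habM').2.2.1
      exact (hA'' _ this).2.1 rfl
    · -- terms
      intro M hM
      rw [Finset.mem_filter, mem_matchings] at hM
      obtain ⟨⟨hM1, hM2⟩, habM⟩ := hM
      have hprod : ∏ e ∈ M, lam e.1 e.2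
          = lam a b * ∏ e ∈ M.erase (a, b), lam e.1 e.2 :=
        (Finset.mul_prod_erase M _ habM).symm
      have hset : A \ mVerts M = ((A.erase a).erase b) \ mVerts (M.erase (a, b)) := by
        ext x
        simp only [Finset.mem_sdiff, Finset.mem_erase]
        constructor
        · intro ⟨hxA, hxV⟩
          refine ⟨⟨?_, ?_, hxA⟩, fun hc => hxV ?_⟩
          · intro hxb
            exact hxV (mem_mVerts.2 ⟨(a, b), habM, Or.inr hxb.symm⟩)
          · intro hxa2
            exact hxV (mem_mVerts.2 ⟨(a, b), habM, Or.inl hxa2.symm⟩)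
          · obtain ⟨e, he, hx⟩ := mem_mVerts.1 hc
            exact mem_mVerts.2 ⟨e, (Finset.mem_erase.1 he).2, hx⟩
        · intro ⟨⟨hxb, hxa, hxA⟩, hxV⟩
          refine ⟨hxA, fun hc => ?_⟩
          obtain ⟨e, he, hx⟩ := mem_mVerts.1 hc
          by_cases heab : e = (a, b)
          · subst heab
            rcases hx with hx | hx
            · exact hxa hx.symm
            · exact hxb hx.symm
          · exact hxV (mem_mVerts.2 ⟨e, Finset.mem_erase.2 ⟨heab, he⟩, hx⟩)
      rw [hprod, hset, map_mul]
      ring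
  have h1 : ∑ M ∈ (matchings lam A).filter (fun M => ¬(a, b) ∈ M),
      (∏ i ∈ A \ mVerts M, (X - C (r i))) * C (∏ e ∈ M, lam e.1 e.2)
      = mu r (zeroAt lam a b) A := by
    rw [mu]
    have hsets : (matchings lam A).filter (fun M => ¬(a, b) ∈ M)
        = matchings (zeroAt lam a b) A := by
      ext M
      simp only [Finset.mem_filter, mem_matchings]
      constructor
      · intro ⟨⟨hM1, hM2⟩, habM⟩
        refine ⟨fun e he => ?_, hM2⟩
        obtain ⟨hlt, hl, hm1, hm2⟩ := hM1 e he
        refine ⟨hlt, ?_, hm1, hm2⟩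
        rw [hcongr e.1 hm1 e.2 hm2 hlt ?_]
        · exact hl
        · by_contra hc
          push_neg at hc
          apply habM
          have : e = (a, b) := Prod.ext hc.1 hc.2
          exact this ▸ he
      · intro ⟨hM1, hM2⟩
        have hnab : (a, b) ∉ M := by
          intro hc
          have := (hM1 _ hc).2.1
          simp only [zeroAt_apply_ab] at this
          exact this rfl
        refine ⟨⟨fun e he => ?_, hM2⟩, hnab⟩
        obtain ⟨hlt, hl, hm1, hm2⟩ := hM1 e he
        refine ⟨hlt, ?_, hm1, hm2⟩
        rw [← hcongr e.1 hm1 e.2 hm2 hlt ?_]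
        · exact hl
        · by_contra hc
          push_neg at hc
          apply hnab
          have : e = (a, b) := Prod.ext hc.1 hc.2
          exact this ▸ he
    rw [hsets]
    refine Finset.sum_congr rfl fun M hM => ?_
    rw [mem_matchings] at hM
    congr 2
    refine Finset.prod_congr rfl fun e he => ?_
    obtain ⟨hlt, hl, hm1, hm2⟩ := hM.1 e he
    rw [hcongr e.1 hm1 e.2 hm2 hlt ?_]
    by_contra hc
    push_neg at hc
    have : e = (a, b) := Prod.ext hc.1 hc.2
    subst this
    simp only [zeroAt_apply_ab] at hl
    exact hl rfl
  rw [h1, h2, add_comm]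

end Stmt19

namespace Stmt19
open Finset
variable {n : ℕ}

lemma not_mem_mVerts_of_iso {lam : Fin n → Fin n → ℝ} {A : Finset (Fin n)}
    {v : Fin n} (hiso : ∀ u ∈ A, u ≠ v → lam v u = 0 ∧ lam u v = 0)
    {M : Finset (Fin n × Fin n)} (hM : IsMatching lam A M) : v ∉ mVerts M := by
  intro hc
  obtain ⟨e, he, hx⟩ := mem_mVerts.1 hc
  obtain ⟨hlt, hl, h1, h2⟩ := hM.1 e he
  rcases hx with hx | hx
  · subst hx
    exact hl (hiso e.2 h2 (ne_of_gt hlt)).1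
  · subst hx
    exact hl (hiso e.1 h1 (ne_of_lt hlt)).2

lemma mu_isolated (r : Fin n → ℝ) (lam : Fin n → Fin n → ℝ) {A : Finset (Fin n)}
    {v : Fin n} (hv : v ∈ A)
    (hiso : ∀ u ∈ A, u ≠ v → lam v u = 0 ∧ lam u v = 0) :
    mu r lam A = (X - C (r v)) * mu r lam (A.erase v) := by
  have hsets : matchings lam A = matchings lam (A.erase v) := by
    ext M
    simp only [mem_matchings]
    constructor
    · intro hM
      have hvM := not_mem_mVerts_of_iso hiso hM
      refine ⟨fun e he => ?_, hM.2⟩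
      obtain ⟨hlt, hl, h1, h2⟩ := hM.1 e he
      refine ⟨hlt, hl, Finset.mem_erase.2 ⟨?_, h1⟩, Finset.mem_erase.2 ⟨?_, h2⟩⟩
      · intro hc; exact hvM (mem_mVerts.2 ⟨e, he, Or.inl hc⟩)
      · intro hc; exact hvM (mem_mVerts.2 ⟨e, he, Or.inr hc⟩)
    · intro hM
      refine ⟨fun e he => ?_, hM.2⟩
      obtain ⟨hlt, hl, h1, h2⟩ := hM.1 e he
      exact ⟨hlt, hl, Finset.mem_of_mem_erase h1, Finset.mem_of_mem_erase h2⟩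
  rw [mu, mu, hsets, Finset.mul_sum]
  refine Finset.sum_congr rfl fun M hM => ?_
  rw [mem_matchings] at hM
  have hvM : v ∉ mVerts M := by
    apply not_mem_mVerts_of_iso (A := A.erase v) ?_ hM
    intro u hu hune
    exact hiso u (Finset.mem_of_mem_erase hu) hune
  have hvin : v ∈ A \ mVerts M := Finset.mem_sdiff.2 ⟨hv, hvM⟩
  have hset : (A \ mVerts M).erase v = (A.erase v) \ mVerts M := by
    ext x
    simp only [Finset.mem_erase, Finset.mem_sdiff]
    tauto
  rw [← Finset.mul_prod_erase _ _ hvin, hset, mul_assoc]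

lemma mu_rec_iso (r : Fin n → ℝ) (lam : Fin n → Fin n → ℝ)
    (hsym : ∀ x y, lam x y = lam y x) {A : Finset (Fin n)} {v : Fin n}
    (hv : v ∈ A) (hN : ∀ u ∈ A.erase v, lam v u = 0) :
    mu r lam A = (X - C (r v)) * mu r lam (A.erase v)
      + ∑ u ∈ A.erase v, C (lam v u) * mu r lam ((A.erase v).erase u) := by
  have hsum : ∑ u ∈ A.erase v, C (lam v u) * mu r lam ((A.erase v).erase u) = 0 := by
    refine Finset.sum_eq_zero fun u hu => ?_
    rw [hN u hu]; simp
  rw [hsum, add_zero]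
  refine mu_isolated r lam hv fun u hu hune => ?_
  have hu' : u ∈ A.erase v := Finset.mem_erase.2 ⟨hune, hu⟩
  exact ⟨hN u hu', by rw [hsym]; exact hN u hu'⟩

lemma mu_rec_aux (k : ℕ) :
    ∀ (lam : Fin n → Fin n → ℝ), (∀ x y, lam x y = lam y x) →
    ∀ (r : Fin n → ℝ) (A : Finset (Fin n)) (v : Fin n), v ∈ A →
    ((A.erase v).filter (fun u => lam v u ≠ 0)).card ≤ k →
    mu r lam A = (X - C (r v)) * mu r lam (A.erase v)
      + ∑ u ∈ A.erase v, C (lam v u) * mu r lam ((A.erase v).erase u) := by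
  induction k with
  | zero =>
    intro lam hsym r A v hv hcard
    have hN : ∀ u ∈ A.erase v, lam v u = 0 := by
      intro u hu
      by_contra hc
      have hmem : u ∈ (A.erase v).filter (fun u => lam v u ≠ 0) :=
        Finset.mem_filter.2 ⟨hu, hc⟩
      have := Finset.card_pos.2 ⟨u, hmem⟩
      omega
    exact mu_rec_iso r lam hsym hv hN
  | succ k ih =>
    intro lam hsym r A v hv hcard
    set N := (A.erase v).filter (fun u => lam v u ≠ 0) with hNdef
    by_cases hNe : N = ∅
    · have hN : ∀ u ∈ A.erase v, lam v u = 0 := by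
        intro u hu
        by_contra hc
        have hmem : u ∈ N := Finset.mem_filter.2 ⟨hu, hc⟩
        rw [hNe] at hmem
        exact absurd hmem (Finset.notMem_empty _)
      exact mu_rec_iso r lam hsym hv hN
    obtain ⟨u₀, hu₀⟩ := Finset.nonempty_iff_ne_empty.2 hNe
    have hu₀' := Finset.mem_filter.1 hu₀
    have hu₀A : u₀ ∈ A.erase v := hu₀'.1
    have hlamvu₀ : lam v u₀ ≠ 0 := hu₀'.2
    have hu₀v : u₀ ≠ v := (Finset.mem_erase.1 hu₀A).1
    -- choose ordered pair
    obtain ⟨a, b, hab, hset, hlamab⟩ :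
        ∃ a b : Fin n, a < b ∧ ({a, b} : Finset (Fin n)) = {v, u₀} ∧ lam a b = lam v u₀ := by
      rcases lt_or_gt_of_ne (Ne.symm hu₀v) with h | h
      · exact ⟨v, u₀, h, rfl, rfl⟩
      · exact ⟨u₀, v, h, by ext x; simp; tauto, hsym u₀ v⟩
    have haA : a ∈ A := by
      have : a ∈ ({v, u₀} : Finset (Fin n)) := hset ▸ (by simp)
      simp at this
      rcases this with rfl | rfl
      · exact hv
      · exact Finset.mem_of_mem_erase hu₀A
    have hbA : b ∈ A := by
      have : b ∈ ({v, u₀} : Finset (Fin n)) := hset ▸ (by simp)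
      simp at this
      rcases this with rfl | rfl
      · exact hv
      · exact Finset.mem_of_mem_erase hu₀A
    have hpair : ∀ x y : Fin n, ((x = a ∧ y = b) ∨ (x = b ∧ y = a)) ↔
        ((x = v ∧ y = u₀) ∨ (x = u₀ ∧ y = v)) := by
      intro x y
      have h1 : a ∈ ({v, u₀} : Finset (Fin n)) := hset ▸ (by simp)
      have h2 : b ∈ ({v, u₀} : Finset (Fin n)) := hset ▸ (by simp)
      have h3 : v ∈ ({a, b} : Finset (Fin n)) := hset.symm ▸ (by simp)
      have h4 : u₀ ∈ ({a, b} : Finset (Fin n)) := hset.symm ▸ (by simp)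
      have hne : a ≠ b := ne_of_lt hab
      simp only [Finset.mem_insert, Finset.mem_singleton] at h1 h2 h3 h4
      rcases h1 with rfl | rfl <;> rcases h2 with rfl | rfl <;> tauto
    set z := zeroAt lam a b with hzdef
    have zsym : ∀ x y, z x y = z y x := by
      intro x y
      by_cases h : (x = a ∧ y = b) ∨ (x = b ∧ y = a)
      · have h' : (y = a ∧ x = b) ∨ (y = b ∧ x = a) := by tauto
        simp [hzdef, zeroAt, h, h']
      · have h' : ¬((y = a ∧ x = b) ∨ (y = b ∧ x = a)) := by tauto
        simp [hzdef, zeroAt, h, h', hsym x y]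
    have hz_notv : ∀ x y : Fin n, x ≠ v → y ≠ v → z x y = lam x y := by
      intro x y hx hy
      apply zeroAt_apply_of_ne
      rw [hpair]
      rintro (⟨rfl, _⟩ | ⟨_, rfl⟩)
      · exact hx rfl
      · exact hy rfl
    have hzv : ∀ u : Fin n, u ≠ u₀ → z v u = lam v u := by
      intro u hu
      apply zeroAt_apply_of_ne
      rw [hpair]
      rintro (⟨_, rfl⟩ | ⟨hvu, _⟩)
      · exact hu rfl
      · exact hu₀v hvu.symm
    have hzvu₀ : z v u₀ = 0 := by
      have : (v = a ∧ u₀ = b) ∨ (v = b ∧ u₀ = a) := by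
        rw [hpair v u₀]; left; exact ⟨rfl, rfl⟩
      simp [hzdef, zeroAt, this]
    -- filter for z is smaller
    have hfilter : (A.erase v).filter (fun u => z v u ≠ 0) = N.erase u₀ := by
      ext u
      simp only [Finset.mem_filter, Finset.mem_erase, hNdef]
      constructor
      · intro ⟨hu, hz⟩
        have hne : u ≠ u₀ := by
          rintro rfl
          exact hz hzvu₀
        rw [hzv u hne] at hz
        exact ⟨hne, hu, hz⟩
      · intro ⟨hne, hu, hl⟩
        rw [← hzv u hne] at hl
        exact ⟨hu, hl⟩
    have hcard' : ((A.erase v).filter (fun u => z v u ≠ 0)).card ≤ k := by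
      rw [hfilter]
      have := Finset.card_erase_of_mem hu₀
      omega
    -- mu of z agrees with mu of lam away from v
    have hzmuA : ∀ B : Finset (Fin n), v ∉ B → mu r z B = mu r lam B := by
      intro B hvB
      refine mu_congr r fun x hx y hy hxy => ?_
      exact hz_notv x y (fun hc => hvB (hc ▸ hx)) (fun hc => hvB (hc ▸ hy))
    have herase : (A.erase a).erase b = (A.erase v).erase u₀ := by
      have h3 : v ∈ ({a, b} : Finset (Fin n)) := hset.symm ▸ (by simp)
      have h4 : u₀ ∈ ({a, b} : Finset (Fin n)) := hset.symm ▸ (by simp)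
      simp only [Finset.mem_insert, Finset.mem_singleton] at h3 h4
      rcases h3 with rfl | rfl <;> rcases h4 with h4 | h4
      · exact absurd h4.symm (by exact fun h => hu₀v (h ▸ rfl))
      · rw [← h4]
      · rw [← h4, Finset.erase_right_comm]
      · exact absurd (h4 ▸ rfl) hu₀v
    have hES := edge_split r lam hab haA hbA
    rw [herase, hlamab] at hES
    have hIH := ih z zsym r A v hv hcard'
    rw [hIH] at hES
    have hz_eraseA : mu r z (A.erase v) = mu r lam (A.erase v) :=
      hzmuA _ (Finset.notMem_erase _ _)
    have hz_sum : ∑ u ∈ A.erase v, C (z v u) * mu r z ((A.erase v).erase u)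
        = ∑ u ∈ (A.erase v).erase u₀, C (lam v u) * mu r lam ((A.erase v).erase u) := by
      rw [← Finset.add_sum_erase _ _ hu₀A, hzvu₀]
      simp only [map_zero, zero_mul, zero_add]
      refine Finset.sum_congr rfl fun u hu => ?_
      have hne : u ≠ u₀ := (Finset.mem_erase.1 hu).1
      rw [hzv u hne,
        hzmuA _ (fun hc => Finset.notMem_erase v A (Finset.mem_of_mem_erase hc))]
    rw [hES, hz_eraseA, hz_sum, ← Finset.add_sum_erase _ _ hu₀A]
    ring

lemma mu_rec (r : Fin n → ℝ) (lam : Fin n → Fin n → ℝ)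
    (hsym : ∀ x y, lam x y = lam y x) {A : Finset (Fin n)} {v : Fin n} (hv : v ∈ A) :
    mu r lam A = (X - C (r v)) * mu r lam (A.erase v)
      + ∑ u ∈ A.erase v, C (lam v u) * mu r lam ((A.erase v).erase u) :=
  mu_rec_aux _ lam hsym r A v hv le_rfl

end Stmt19

namespace Stmt19
open Finset
variable {n : ℕ}

lemma mVerts_union {M₁ M₂ : Finset (Fin n × Fin n)} :
    mVerts (M₁ ∪ M₂) = mVerts M₁ ∪ mVerts M₂ := by
  ext x
  simp only [mem_mVerts, Finset.mem_union]
  constructor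
  · rintro ⟨e, he | he, hx⟩
    · exact Or.inl ⟨e, he, hx⟩
    · exact Or.inr ⟨e, he, hx⟩
  · rintro (⟨e, he, hx⟩ | ⟨e, he, hx⟩)
    · exact ⟨e, Or.inl he, hx⟩
    · exact ⟨e, Or.inr he, hx⟩

lemma mu_prod (r : Fin n → ℝ) (lam : Fin n → Fin n → ℝ) {B D : Finset (Fin n)}
    (hdisj : Disjoint B D)
    (hcross : ∀ x ∈ B, ∀ y ∈ D, lam x y = 0 ∧ lam y x = 0) :
    mu r lam (B ∪ D) = mu r lam B * mu r lam D := by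
  have hBD : ∀ {e : Fin n × Fin n}, e.1 < e.2 → lam e.1 e.2 ≠ 0 →
      e.1 ∈ B ∪ D → e.2 ∈ B ∪ D → (e.1 ∈ B ∧ e.2 ∈ B) ∨ (e.1 ∈ D ∧ e.2 ∈ D) := by
    intro e _ hl h1 h2
    rcases Finset.mem_union.1 h1 with h1 | h1 <;> rcases Finset.mem_union.1 h2 with h2 | h2
    · exact Or.inl ⟨h1, h2⟩
    · exact absurd (hcross e.1 h1 e.2 h2).1 hl
    · exact absurd (hcross e.2 h2 e.1 h1).2 hl
    · exact Or.inr ⟨h1, h2⟩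
  rw [mu, mu, mu, Finset.sum_mul_sum, ← Finset.sum_product']
  refine Finset.sum_bij'
    (fun M _ => (M.filter (fun e => e.1 ∈ B), M.filter (fun e => e.1 ∈ D)))
    (fun P _ => P.1 ∪ P.2) ?_ ?_ ?_ ?_ ?_
  · -- hi
    intro M hM
    rw [mem_matchings] at hM
    rw [Finset.mem_product]
    constructor
    · rw [mem_matchings]
      refine ⟨fun e he => ?_, fun e he f hf => hM.2 e (Finset.mem_filter.1 he).1
        f (Finset.mem_filter.1 hf).1⟩
      obtain ⟨heM, heB⟩ := Finset.mem_filter.1 he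
      obtain ⟨hlt, hl, h1, h2⟩ := hM.1 e heM
      rcases hBD hlt hl h1 h2 with ⟨hb1, hb2⟩ | ⟨hd1, hd2⟩
      · exact ⟨hlt, hl, hb1, hb2⟩
      · exact absurd heB (fun hc => (Finset.disjoint_left.1 hdisj) hc hd1)
    · rw [mem_matchings]
      refine ⟨fun e he => ?_, fun e he f hf => hM.2 e (Finset.mem_filter.1 he).1
        f (Finset.mem_filter.1 hf).1⟩
      obtain ⟨heM, heD⟩ := Finset.mem_filter.1 he
      obtain ⟨hlt, hl, h1, h2⟩ := hM.1 e heM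
      rcases hBD hlt hl h1 h2 with ⟨hb1, hb2⟩ | ⟨hd1, hd2⟩
      · exact absurd heD (fun hc => (Finset.disjoint_left.1 hdisj) hb1 hc)
      · exact ⟨hlt, hl, hd1, hd2⟩
  · -- hj
    intro P hP
    rw [Finset.mem_product] at hP
    obtain ⟨hP1, hP2⟩ := hP
    rw [mem_matchings] at hP1 hP2 ⊢
    constructor
    · intro e he
      rcases Finset.mem_union.1 he with he | he
      · obtain ⟨hlt, hl, h1, h2⟩ := hP1.1 e he
        exact ⟨hlt, hl, Finset.mem_union.2 (Or.inl h1), Finset.mem_union.2 (Or.inl h2)⟩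
      · obtain ⟨hlt, hl, h1, h2⟩ := hP2.1 e he
        exact ⟨hlt, hl, Finset.mem_union.2 (Or.inr h1), Finset.mem_union.2 (Or.inr h2)⟩
    · intro e he f hf hef
      rcases Finset.mem_union.1 he with he | he <;> rcases Finset.mem_union.1 hf with hf | hf
      · exact hP1.2 e he f hf hef
      · obtain ⟨_, _, e1, e2⟩ := hP1.1 e he
        obtain ⟨_, _, f1, f2⟩ := hP2.1 f hf
        have hd := Finset.disjoint_left.1 hdisj
        exact ⟨fun hc => hd (hc ▸ e1) f1, fun hc => hd (hc ▸ e1) f2,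
          fun hc => hd (hc ▸ e2) f1, fun hc => hd (hc ▸ e2) f2⟩
      · obtain ⟨_, _, e1, e2⟩ := hP2.1 e he
        obtain ⟨_, _, f1, f2⟩ := hP1.1 f hf
        have hd := Finset.disjoint_left.1 hdisj
        exact ⟨fun hc => hd f1 (hc ▸ e1), fun hc => hd f2 (hc ▸ e1),
          fun hc => hd f1 (hc ▸ e2), fun hc => hd f2 (hc ▸ e2)⟩
      · exact hP2.2 e he f hf hef
  · -- left inverse
    intro M hM
    rw [mem_matchings] at hM
    ext e
    simp only [Finset.mem_union, Finset.mem_filter]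
    constructor
    · rintro (⟨he, _⟩ | ⟨he, _⟩) <;> exact he
    · intro he
      obtain ⟨hlt, hl, h1, h2⟩ := hM.1 e he
      rcases hBD hlt hl h1 h2 with ⟨hb, _⟩ | ⟨hd, _⟩
      · exact Or.inl ⟨he, hb⟩
      · exact Or.inr ⟨he, hd⟩
  · -- right inverse
    intro P hP
    rw [Finset.mem_product] at hP
    obtain ⟨hP1, hP2⟩ := hP
    rw [mem_matchings] at hP1 hP2
    have hd := Finset.disjoint_left.1 hdisj
    have e1B : ∀ e ∈ P.1, e.1 ∈ B := fun e he => (hP1.1 e he).2.2.1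
    have e1D : ∀ e ∈ P.2, e.1 ∈ D := fun e he => (hP2.1 e he).2.2.1
    have h1 : (P.1 ∪ P.2).filter (fun e => e.1 ∈ B) = P.1 := by
      ext e
      simp only [Finset.mem_filter, Finset.mem_union]
      constructor
      · rintro ⟨he | he, heB⟩
        · exact he
        · exact absurd heB (fun hc => hd hc (e1D e he))
      · intro he
        exact ⟨Or.inl he, e1B e he⟩
    have h2 : (P.1 ∪ P.2).filter (fun e => e.1 ∈ D) = P.2 := by
      ext e
      simp only [Finset.mem_filter, Finset.mem_union]
      constructor
      · rintro ⟨he | he, heD⟩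
        · exact absurd heD (fun hc => hd (e1B e he) hc)
        · exact he
      · intro he
        exact ⟨Or.inr he, e1D e he⟩
    exact Prod.ext h1 h2
  · -- terms
    intro M hM
    rw [mem_matchings] at hM
    set M₁ := M.filter (fun e => e.1 ∈ B) with hM₁
    set M₂ := M.filter (fun e => e.1 ∈ D) with hM₂
    have hsplit : M = M₁ ∪ M₂ := by
      ext e
      simp only [hM₁, hM₂, Finset.mem_union, Finset.mem_filter]
      constructor
      · intro he
        obtain ⟨hlt, hl, h1, h2⟩ := hM.1 e he
        rcases hBD hlt hl h1 h2 with ⟨hb, _⟩ | ⟨hdd, _⟩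
        · exact Or.inl ⟨he, hb⟩
        · exact Or.inr ⟨he, hdd⟩
      · rintro (⟨he, _⟩ | ⟨he, _⟩) <;> exact he
    have hMd : Disjoint M₁ M₂ := by
      rw [Finset.disjoint_left]
      intro e he1 he2
      exact (Finset.disjoint_left.1 hdisj)
        ((Finset.mem_filter.1 he1).2) ((Finset.mem_filter.1 he2).2)
    have hV1 : mVerts M₁ ⊆ B := by
      intro x hx
      obtain ⟨e, he, hx⟩ := mem_mVerts.1 hx
      obtain ⟨heM, heB⟩ := Finset.mem_filter.1 he
      obtain ⟨hlt, hl, h1, h2⟩ := hM.1 e heM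
      rcases hBD hlt hl h1 h2 with ⟨hb1, hb2⟩ | ⟨hd1, hd2⟩
      · rcases hx with rfl | rfl
        · exact hb1
        · exact hb2
      · exact absurd heB (fun hc => (Finset.disjoint_left.1 hdisj) hc hd1)
    have hV2 : mVerts M₂ ⊆ D := by
      intro x hx
      obtain ⟨e, he, hx⟩ := mem_mVerts.1 hx
      obtain ⟨heM, heD⟩ := Finset.mem_filter.1 he
      obtain ⟨hlt, hl, h1, h2⟩ := hM.1 e heM
      rcases hBD hlt hl h1 h2 with ⟨hb1, hb2⟩ | ⟨hd1, hd2⟩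
      · exact absurd heD (fun hc => (Finset.disjoint_left.1 hdisj) hb1 hc)
      · rcases hx with rfl | rfl
        · exact hd1
        · exact hd2
    have hsets : (B ∪ D) \ mVerts M = (B \ mVerts M₁) ∪ (D \ mVerts M₂) := by
      rw [hsplit, mVerts_union]
      ext x
      simp only [Finset.mem_sdiff, Finset.mem_union, not_or]
      have hd := Finset.disjoint_left.1 hdisj
      constructor
      · rintro ⟨hx | hx, h1, h2⟩
        · exact Or.inl ⟨hx, h1⟩
        · exact Or.inr ⟨hx, h2⟩
      · rintro (⟨hx, h1⟩ | ⟨hx, h2⟩)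
        · exact ⟨Or.inl hx, h1, fun hc => hd hx (hV2 hc)⟩
        · exact ⟨Or.inr hx, fun hc => hd (hV1 hc) hx, h2⟩
    have hdisjsets : Disjoint (B \ mVerts M₁) (D \ mVerts M₂) :=
      Finset.disjoint_of_subset_left (Finset.sdiff_subset)
        (Finset.disjoint_of_subset_right (Finset.sdiff_subset) hdisj)
    have hprodsplit : ∏ e ∈ M, lam e.1 e.2 = (∏ e ∈ M₁, lam e.1 e.2) * ∏ e ∈ M₂, lam e.1 e.2 := by
      rw [hsplit, Finset.prod_union hMd]
    rw [hsets, Finset.prod_union hdisjsets, hprodsplit, map_mul]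
    ring

end Stmt19

namespace Stmt19
open Finset Polynomial Filter
variable {n : ℕ}

lemma eventually_pos {p : ℝ[X]} (hm : p.Monic) : ∃ Y : ℝ, ∀ t, Y ≤ t → 0 < p.eval t := by
  by_cases hdeg : p.natDegree = 0
  · have hp1 : p = 1 := hm.natDegree_eq_zero.1 hdeg
    exact ⟨0, fun t _ => by simp [hp1]⟩
  · have hdeg' : 0 < p.degree := by
      rw [Polynomial.degree_eq_natDegree hm.ne_zero]
      exact_mod_cast Nat.pos_of_ne_zero hdeg
    have htend := Polynomial.tendsto_atTop_of_leadingCoeff_nonneg p hdeg'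
      (by rw [hm.leadingCoeff]; norm_num)
    have := htend.eventually_gt_atTop 0
    rw [Filter.eventually_atTop] at this
    obtain ⟨Y, hY⟩ := this
    exact ⟨Y, fun t ht => hY t ht⟩

lemma pos_on_ray {p : ℝ[X]} (hm : p.Monic) {t : ℝ} (h : ∀ y, t ≤ y → ¬p.IsRoot y) :
    ∀ y, t ≤ y → 0 < p.eval y := by
  intro y hy
  rcases lt_trichotomy (p.eval y) 0 with hc | hc | hc
  · obtain ⟨Y, hY⟩ := eventually_pos hm
    set Y' := max y Y with hY'
    have h1 : y ≤ Y' := le_max_left _ _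
    have h2 : 0 < p.eval Y' := hY Y' (le_max_right _ _)
    have hsub := intermediate_value_Icc h1 (p.continuous.continuousOn (s := Set.Icc y Y'))
    have h0 : (0 : ℝ) ∈ Set.Icc (p.eval y) (p.eval Y') := ⟨hc.le, h2.le⟩
    obtain ⟨c, hcI, hceval⟩ := hsub h0
    exact absurd hceval (h c (le_trans hy hcI.1))
  · exact absurd hc (h y hy)
  · exact hc

lemma exists_max_root {p : ℝ[X]} (hp : p ≠ 0) {x0 : ℝ} (hx0 : p.IsRoot x0) :
    ∃ w, p.IsRoot w ∧ ∀ x, p.IsRoot x → x ≤ w := by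
  have hne : p.roots.toFinset.Nonempty :=
    ⟨x0, by simp [Multiset.mem_toFinset, Polynomial.mem_roots hp, hx0.eq_zero]⟩
  refine ⟨p.roots.toFinset.max' hne, ?_, ?_⟩
  · have := Finset.max'_mem _ hne
    simpa [Multiset.mem_toFinset, Polynomial.mem_roots hp] using this
  · intro x hx
    exact Finset.le_max' _ _ (by simp [Multiset.mem_toFinset, Polynomial.mem_roots hp, hx.eq_zero])

lemma eval_nonneg_boundary {p : ℝ[X]} {t : ℝ} (h : ∀ y, t < y → 0 < p.eval y) :
    0 ≤ p.eval t := by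
  have hten : Filter.Tendsto (fun y => p.eval y) (nhdsWithin t (Set.Ioi t)) (nhds (p.eval t)) :=
    (p.continuous.tendsto t).mono_left nhdsWithin_le_nhds
  refine ge_of_tendsto hten ?_
  exact eventually_nhdsWithin_of_forall fun x hx => (h x hx).le

lemma pos_erase_aux (r : Fin n → ℝ) (lam : Fin n → Fin n → ℝ)
    (hsym : ∀ x y, lam x y = lam y x) (hnonpos : ∀ x y, lam x y ≤ 0) :
    ∀ k : ℕ, ∀ A : Finset (Fin n), A.card ≤ k → ∀ v ∈ A, ∀ t : ℝ,
    (∀ y, t ≤ y → 0 < (mu r lam A).eval y) →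
    ∀ y, t ≤ y → 0 < (mu r lam (A.erase v)).eval y := by
  intro k
  induction k with
  | zero =>
    intro A hA v hv
    rw [Nat.le_zero, Finset.card_eq_zero] at hA
    subst hA
    exact absurd hv (Finset.notMem_empty _)
  | succ k ih =>
    intro A hcard v hv t hpos y hy
    by_contra hc
    push_neg at hc
    set q := mu r lam (A.erase v) with hq
    have hqm : q.Monic := mu_monic r lam _
    -- find a root of q that is ≥ y
    have hroot : ∃ w₀, q.IsRoot w₀ ∧ y ≤ w₀ := by
      rcases eq_or_lt_of_le hc with heq | hlt
      · exact ⟨y, Polynomial.IsRoot.def.2 heq, le_refl y⟩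
      · obtain ⟨Y, hY⟩ := eventually_pos hqm
        set Y' := max y Y with hY'
        have h1 : y ≤ Y' := le_max_left _ _
        have h2 : 0 < q.eval Y' := hY Y' (le_max_right _ _)
        have hsub := intermediate_value_Icc h1 (q.continuous.continuousOn (s := Set.Icc y Y'))
        obtain ⟨c, hcI, hceval⟩ := hsub ⟨hlt.le, h2.le⟩
        exact ⟨c, hceval, hcI.1⟩
    obtain ⟨w₀, hw₀, hyw₀⟩ := hroot
    obtain ⟨w, hwroot, hwub⟩ := exists_max_root hqm.ne_zero hw₀
    have hyw : y ≤ w := le_trans hyw₀ (hwub w₀ hw₀)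
    have hqpos : ∀ s, w < s → 0 < q.eval s := by
      intro s hs
      refine pos_on_ray hqm (t := s) (fun x hx hroot => ?_) s (le_refl s)
      exact absurd (hwub x hroot) (by linarith)
    have hsub : ∀ u ∈ A.erase v, 0 ≤ (mu r lam ((A.erase v).erase u)).eval w := by
      intro u hu
      apply eval_nonneg_boundary
      intro s hs
      have hposq : ∀ y', (w + s) / 2 ≤ y' → 0 < q.eval y' := fun y' hy' =>
        hqpos y' (lt_of_lt_of_le (by linarith) hy')
      have hcard' : (A.erase v).card ≤ k := by
        have := Finset.card_erase_of_mem hv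
        omega
      exact ih (A.erase v) hcard' u hu ((w + s) / 2) hposq s (by linarith)
    have hrec := mu_rec r lam hsym hv
    have hev : (mu r lam A).eval w = (w - r v) * q.eval w
        + ∑ u ∈ A.erase v, lam v u * (mu r lam ((A.erase v).erase u)).eval w := by
      rw [hrec]
      simp [Polynomial.eval_finset_sum]
      exact Or.inl rfl
    have hqw : q.eval w = 0 := hwroot
    have hsumle : ∑ u ∈ A.erase v, lam v u * (mu r lam ((A.erase v).erase u)).eval w ≤ 0 :=
      Finset.sum_nonpos fun u hu => mul_nonpos_iff.2 (Or.inr ⟨hnonpos v u, hsub u hu⟩)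
    have h1 : 0 < (mu r lam A).eval w := hpos w (le_trans hy hyw)
    rw [hev, hqw] at h1
    linarith

lemma pos_erase (r : Fin n → ℝ) (lam : Fin n → Fin n → ℝ)
    (hsym : ∀ x y, lam x y = lam y x) (hnonpos : ∀ x y, lam x y ≤ 0)
    {A : Finset (Fin n)} {v : Fin n} (hv : v ∈ A) {t : ℝ}
    (hpos : ∀ y, t ≤ y → 0 < (mu r lam A).eval y) :
    ∀ y, t ≤ y → 0 < (mu r lam (A.erase v)).eval y :=
  pos_erase_aux r lam hsym hnonpos A.card A le_rfl v hv t hpos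

lemma pos_subset (r : Fin n → ℝ) (lam : Fin n → Fin n → ℝ)
    (hsym : ∀ x y, lam x y = lam y x) (hnonpos : ∀ x y, lam x y ≤ 0) :
    ∀ k : ℕ, ∀ A B : Finset (Fin n), A.card ≤ k → B ⊆ A → ∀ t : ℝ,
    (∀ y, t ≤ y → 0 < (mu r lam A).eval y) →
    ∀ y, t ≤ y → 0 < (mu r lam B).eval y := by
  intro k
  induction k with
  | zero =>
    intro A B hA hBA t hpos
    rw [Nat.le_zero, Finset.card_eq_zero] at hA
    subst hA
    rw [Finset.subset_empty.1 hBA]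
    exact hpos
  | succ k ih =>
    intro A B hcard hBA t hpos
    rcases eq_or_ssubset_of_subset hBA with rfl | hss
    · exact hpos
    · obtain ⟨v, hvA, hvB⟩ := Finset.exists_of_ssubset hss
      have hBA' : B ⊆ A.erase v := fun x hx =>
        Finset.mem_erase.2 ⟨fun hc => hvB (hc ▸ hx), hBA hx⟩
      have hcard' : (A.erase v).card ≤ k := by
        have := Finset.card_erase_of_mem hvA
        omega
      exact ih (A.erase v) B hcard' hBA' t (pos_erase r lam hsym hnonpos hvA hpos)

end Stmt19

namespace Stmt19
open Finset
variable {n : ℕ}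

def Step (lam : Fin n → Fin n → ℝ) (S : Finset (Fin n)) (x y : Fin n) : Prop :=
  x ∈ S ∧ y ∈ S ∧ lam x y ≠ 0

def Reach (lam : Fin n → Fin n → ℝ) (S : Finset (Fin n)) (x y : Fin n) : Prop :=
  Relation.ReflTransGen (Step lam S) x y

def Conn (lam : Fin n → Fin n → ℝ) (S : Finset (Fin n)) : Prop :=
  ∀ x ∈ S, ∀ y ∈ S, Reach lam S x y

noncomputable def comp (lam : Fin n → Fin n → ℝ) (S : Finset (Fin n)) (a : Fin n) :
    Finset (Fin n) := S.filter (fun b => Reach lam S a b)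

lemma step_symm {lam : Fin n → Fin n → ℝ} (hsym : ∀ x y, lam x y = lam y x)
    {S : Finset (Fin n)} : Symmetric (Step lam S) := by
  intro x y ⟨h1, h2, h3⟩
  exact ⟨h2, h1, by rw [hsym]; exact h3⟩

lemma reach_symm {lam : Fin n → Fin n → ℝ} (hsym : ∀ x y, lam x y = lam y x)
    {S : Finset (Fin n)} {x y : Fin n} (h : Reach lam S x y) : Reach lam S y x :=
  haveI : Std.Symm (Step lam S) := ⟨fun a b hab => step_symm hsym hab⟩
  Relation.ReflTransGen.symmetric.symm _ _ h

lemma reach_mono {lam : Fin n → Fin n → ℝ} {S T : Finset (Fin n)} (hST : S ⊆ T)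
    {x y : Fin n} (h : Reach lam S x y) : Reach lam T x y := by
  refine Relation.ReflTransGen.mono (r := Step lam S) (p := Step lam T) ?_ _ _ h
  intro a b ⟨h1, h2, h3⟩
  exact ⟨hST h1, hST h2, h3⟩

lemma mem_comp {lam : Fin n → Fin n → ℝ} {S : Finset (Fin n)} {a b : Fin n} :
    b ∈ comp lam S a ↔ b ∈ S ∧ Reach lam S a b := Finset.mem_filter

lemma comp_subset {lam : Fin n → Fin n → ℝ} {S : Finset (Fin n)} {a : Fin n} :
    comp lam S a ⊆ S := Finset.filter_subset _ _

lemma mem_comp_self {lam : Fin n → Fin n → ℝ} {S : Finset (Fin n)} {a : Fin n}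
    (ha : a ∈ S) : a ∈ comp lam S a := mem_comp.2 ⟨ha, Relation.ReflTransGen.refl⟩

lemma comp_closed {lam : Fin n → Fin n → ℝ} {S : Finset (Fin n)} {a x y : Fin n}
    (hx : x ∈ comp lam S a) (hstep : Step lam S x y) : y ∈ comp lam S a :=
  mem_comp.2 ⟨hstep.2.1, (mem_comp.1 hx).2.tail hstep⟩

lemma reach_comp {lam : Fin n → Fin n → ℝ} {S : Finset (Fin n)} {a x : Fin n}
    (ha : a ∈ S) (h : Reach lam S a x) : Reach lam (comp lam S a) a x := by
  induction h with
  | refl => exact Relation.ReflTransGen.refl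
  | tail hab hstep ih =>
    rename_i b c
    have hb : b ∈ comp lam S a := mem_comp.2 ⟨hstep.1, hab⟩
    have hc : c ∈ comp lam S a := comp_closed hb hstep
    exact ih.tail ⟨hb, hc, hstep.2.2⟩

lemma comp_conn {lam : Fin n → Fin n → ℝ} (hsym : ∀ x y, lam x y = lam y x)
    {S : Finset (Fin n)} {a : Fin n} : Conn lam (comp lam S a) := by
  intro x hx y hy
  obtain ⟨hxS, hax⟩ := mem_comp.1 hx
  obtain ⟨hyS, hay⟩ := mem_comp.1 hy
  have haS : a ∈ S := by
    rcases (Relation.ReflTransGen.cases_head hax) with rfl | ⟨c, hstep, _⟩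
    · exact hxS
    · exact hstep.1
  have h1 := reach_comp haS hax
  have h2 := reach_comp haS hay
  exact Relation.ReflTransGen.trans (reach_symm hsym h1) h2

lemma reach_avoid {lam : Fin n → Fin n → ℝ} (hsym : ∀ x y, lam x y = lam y x)
    {S : Finset (Fin n)} {a a' x : Fin n} (ha' : a' ∈ S) (hna : a' ∉ comp lam S a)
    (h : Reach lam S a' x) : Reach lam (S \ comp lam S a) a' x := by
  have hnot : ∀ y, Reach lam S a' y → y ∉ comp lam S a := by
    intro y hy hyc
    apply hna
    obtain ⟨hyS, hay⟩ := mem_comp.1 hyc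
    exact mem_comp.2 ⟨ha', hay.trans (reach_symm hsym hy)⟩
  induction h with
  | refl => exact Relation.ReflTransGen.refl
  | tail hab hstep ih =>
    rename_i b c
    have hb : b ∉ comp lam S a := hnot b hab
    have hc : c ∉ comp lam S a := hnot c (hab.tail hstep)
    exact ih.tail
      ⟨Finset.mem_sdiff.2 ⟨hstep.1, hb⟩, Finset.mem_sdiff.2 ⟨hstep.2.1, hc⟩, hstep.2.2⟩

lemma comp_sdiff {lam : Fin n → Fin n → ℝ} (hsym : ∀ x y, lam x y = lam y x)
    {S : Finset (Fin n)} {a a' : Fin n} (ha' : a' ∈ S) (hna : a' ∉ comp lam S a) :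
    comp lam (S \ comp lam S a) a' = comp lam S a' := by
  ext x
  constructor
  · intro hx
    obtain ⟨hxD, hr⟩ := mem_comp.1 hx
    exact mem_comp.2 ⟨(Finset.mem_sdiff.1 hxD).1, reach_mono Finset.sdiff_subset hr⟩
  · intro hx
    obtain ⟨hxS, hr⟩ := mem_comp.1 hx
    have hr' := reach_avoid hsym ha' hna hr
    have hxc : x ∉ comp lam S a := by
      intro hc
      apply hna
      obtain ⟨_, hax⟩ := mem_comp.1 hc
      exact mem_comp.2 ⟨ha', hax.trans (reach_symm hsym hr)⟩
    exact mem_comp.2 ⟨Finset.mem_sdiff.2 ⟨hxS, hxc⟩, hr'⟩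

lemma exists_exit {lam : Fin n → Fin n → ℝ} {T : Finset (Fin n)} {P : Finset (Fin n)}
    {a b : Fin n} (h : Reach lam T a b) (ha : a ∈ P) (hb : b ∉ P) :
    ∃ x ∈ P, ∃ y, y ∉ P ∧ Step lam T x y := by
  induction h using Relation.ReflTransGen.head_induction_on with
  | refl => exact absurd ha hb
  | head hstep _ ih =>
    rename_i u c _
    by_cases hcP : c ∈ P
    · exact ih hcP
    · exact ⟨u, ha, c, hcP, hstep⟩

end Stmt19

namespace Stmt19
open Finset Polynomial
variable {n : ℕ}

lemma vanish_comp (r : Fin n → ℝ) (lam : Fin n → Fin n → ℝ)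
    (hsym : ∀ x y, lam x y = lam y x) :
    ∀ k : ℕ, ∀ S : Finset (Fin n), S.card ≤ k → ∀ z : ℝ,
    (mu r lam S).eval z = 0 → ∃ a ∈ S, (mu r lam (comp lam S a)).eval z = 0 := by
  intro k
  induction k with
  | zero =>
    intro S hS z hz
    rw [Nat.le_zero, Finset.card_eq_zero] at hS
    subst hS
    rw [mu_empty] at hz
    simp at hz
  | succ k ih =>
    intro S hcard z hz
    rcases Finset.eq_empty_or_nonempty S with rfl | ⟨a₀, ha₀⟩
    · rw [mu_empty] at hz
      simp at hz
    set B := comp lam S a₀ with hB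
    set D := S \ B with hD
    have hBS : B ⊆ S := comp_subset
    have hunion : B ∪ D = S := Finset.union_sdiff_of_subset hBS
    have hdisj : Disjoint B D := Finset.disjoint_sdiff
    have hcross : ∀ x ∈ B, ∀ y ∈ D, lam x y = 0 ∧ lam y x = 0 := by
      intro x hx y hy
      obtain ⟨hyS, hyB⟩ := Finset.mem_sdiff.1 hy
      constructor
      · by_contra hc
        exact hyB (comp_closed hx ⟨hBS hx, hyS, hc⟩)
      · by_contra hc
        have : lam x y ≠ 0 := by rw [hsym]; exact hc
        exact hyB (comp_closed hx ⟨hBS hx, hyS, this⟩)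
    have hprod := mu_prod r lam hdisj hcross
    rw [hunion] at hprod
    rw [hprod, Polynomial.eval_mul] at hz
    rcases mul_eq_zero.1 hz with h | h
    · exact ⟨a₀, ha₀, h⟩
    · have hDcard : D.card ≤ k := by
        have h1 : 1 ≤ B.card := Finset.card_pos.2 ⟨a₀, mem_comp_self ha₀⟩
        have h2 : D.card = S.card - B.card := Finset.card_sdiff_of_subset hBS
        have h3 : B.card ≤ S.card := Finset.card_le_card hBS
        omega
      obtain ⟨a', ha'D, ha'⟩ := ih D hDcard z h
      obtain ⟨ha'S, ha'B⟩ := Finset.mem_sdiff.1 ha'D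
      refine ⟨a', ha'S, ?_⟩
      rwa [← comp_sdiff hsym ha'S ha'B]

end Stmt19

namespace Stmt19
open Finset Polynomial
variable {n : ℕ}

lemma key_aux (r : Fin n → ℝ) (lam : Fin n → Fin n → ℝ)
    (hsym : ∀ x y, lam x y = lam y x) (hnonpos : ∀ x y, lam x y ≤ 0) :
    ∀ k : ℕ, ∀ A : Finset (Fin n), A.card ≤ k → Conn lam A → ∀ z : ℝ,
    (mu r lam A).IsRoot z → (∀ x, (mu r lam A).IsRoot x → x ≤ z) →
    ∀ v ∈ A, 0 < (mu r lam (A.erase v)).eval z := by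
  intro k
  induction k with
  | zero =>
    intro A hA hconn z hroot hub v hv
    rw [Nat.le_zero, Finset.card_eq_zero] at hA
    subst hA
    exact absurd hv (Finset.notMem_empty _)
  | succ k ih =>
    intro A hcard hconn z hroot hub v hv
    have hposA : ∀ y, z < y → 0 < (mu r lam A).eval y := by
      intro y hy
      refine pos_on_ray (mu_monic r lam A) (t := y) (fun x hx hr => ?_) y le_rfl
      exact absurd (hub x hr) (by linarith)
    have hposSub : ∀ B : Finset (Fin n), B ⊆ A → ∀ y, z < y → 0 < (mu r lam B).eval y := by
      intro B hBA y hy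
      refine pos_subset r lam hsym hnonpos A.card A B le_rfl hBA ((z + y) / 2)
        (fun s hs => hposA s (by linarith)) y (by linarith)
    by_contra hc
    push_neg at hc
    set S := A.erase v with hSdef
    have hSA : S ⊆ A := Finset.erase_subset _ _
    have hSz : (mu r lam S).eval z = 0 :=
      le_antisymm hc (eval_nonneg_boundary (fun y hy => hposSub S hSA y hy))
    obtain ⟨a, haS, hCz⟩ := vanish_comp r lam hsym S.card S le_rfl z hSz
    set C₁ := comp lam S a with hC₁def
    have hC₁S : C₁ ⊆ S := comp_subset
    have hvC₁ : v ∉ C₁ := fun hcc => Finset.notMem_erase v A (hC₁S hcc)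
    have haA : a ∈ A := hSA haS
    have haC₁ : a ∈ C₁ := mem_comp_self haS
    obtain ⟨x, hxC₁, y, hyC₁, hstep⟩ := exists_exit (hconn a haA v hv) haC₁ hvC₁
    have hyv : y = v := by
      by_contra hyvne
      have hyS : y ∈ S := Finset.mem_erase.2 ⟨hyvne, hstep.2.1⟩
      exact hyC₁ (comp_closed hxC₁ ⟨hC₁S hxC₁, hyS, hstep.2.2⟩)
    have hlamxv : lam x v ≠ 0 := by rw [← hyv]; exact hstep.2.2
    by_cases hCS : C₁ = S
    · -- A.erase v is connected : use the recurrence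
      have hconnS : Conn lam S := hCS ▸ comp_conn hsym
      have hubS : ∀ t, (mu r lam S).IsRoot t → t ≤ z := by
        intro t ht
        by_contra hgt
        push_neg at hgt
        exact absurd ht.eq_zero (ne_of_gt (hposSub S hSA t hgt))
      have hcardS : S.card ≤ k := by
        have h1 : S.card = A.card - 1 := Finset.card_erase_of_mem hv
        have h2 : 0 < A.card := Finset.card_pos.2 ⟨v, hv⟩
        omega
      have hIH := ih S hcardS hconnS z (Polynomial.IsRoot.def.2 hSz) hubS
      have hev : (mu r lam A).eval z = (z - r v) * (mu r lam S).eval z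
          + ∑ u ∈ S, lam v u * (mu r lam (S.erase u)).eval z := by
        rw [mu_rec r lam hsym hv]
        simp [Polynomial.eval_finset_sum, hSdef]
      have hxS : x ∈ S := hC₁S hxC₁
      have hsum_neg : ∑ u ∈ S, lam v u * (mu r lam (S.erase u)).eval z < 0 := by
        have hlt := Finset.sum_lt_sum (f := fun u => lam v u * (mu r lam (S.erase u)).eval z)
          (g := fun _ => (0 : ℝ)) (s := S)
          (fun u hu => mul_nonpos_iff.2 (Or.inr ⟨hnonpos v u, (hIH u hu).le⟩))
          ⟨x, hxS, ?_⟩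
        · simpa using hlt
        · have hvx : lam v x < 0 :=
            lt_of_le_of_ne (hnonpos v x) (fun h => hlamxv ((hsym x v).trans h))
          exact mul_neg_of_neg_of_pos hvx (hIH x hxS)
      have h1 : (mu r lam A).eval z = 0 := hroot
      rw [hev, hSz, mul_zero, zero_add] at h1
      linarith
    · -- C₁ is a proper component : pass to B = insert v C₁
      have hC₁ssub : C₁ ⊂ S := ssubset_of_subset_of_ne hC₁S hCS
      set B := insert v C₁ with hBdef
      have hBv : B.erase v = C₁ := Finset.erase_insert hvC₁
      have hBA : B ⊆ A := by
        intro u hu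
        rcases Finset.mem_insert.1 hu with rfl | hu
        · exact hv
        · exact hSA (hC₁S hu)
      have hvB : v ∈ B := Finset.mem_insert_self _ _
      have hxB : x ∈ B := Finset.mem_insert_of_mem hxC₁
      have hreachv : ∀ c ∈ C₁, Reach lam B c v := by
        intro c hcC
        have h1 : Reach lam C₁ c x := comp_conn hsym c hcC x hxC₁
        exact (reach_mono (Finset.subset_insert _ _) h1).tail ⟨hxB, hvB, hlamxv⟩
      have hconnB : Conn lam B := by
        intro u hu w hw
        have hru : Reach lam B u v := by
          rcases Finset.mem_insert.1 hu with rfl | hu'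
          · exact Relation.ReflTransGen.refl
          · exact hreachv u hu'
        have hrw : Reach lam B w v := by
          rcases Finset.mem_insert.1 hw with rfl | hw'
          · exact Relation.ReflTransGen.refl
          · exact hreachv w hw'
        exact hru.trans (reach_symm hsym hrw)
      have hubB : ∀ t, (mu r lam B).IsRoot t → t ≤ z := by
        intro t ht
        by_contra hgt
        push_neg at hgt
        exact absurd ht.eq_zero (ne_of_gt (hposSub B hBA t hgt))
      have hrootB : (mu r lam B).IsRoot z := by
        by_contra hnr
        have hposB : ∀ s, z ≤ s → 0 < (mu r lam B).eval s := by
          intro s hs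
          rcases eq_or_lt_of_le hs with heq | hlt
          · have hnn : 0 ≤ (mu r lam B).eval s := by
              refine eval_nonneg_boundary (fun t ht => hposSub B hBA t ?_)
              rw [heq]
              exact ht
            rcases lt_or_eq_of_le hnn with h | h
            · exact h
            · exact absurd (Polynomial.IsRoot.def.2 h.symm) (heq ▸ hnr)
          · exact hposSub B hBA s hlt
        have hpe := pos_erase r lam hsym hnonpos hvB hposB z le_rfl
        rw [hBv] at hpe
        exact absurd hCz (ne_of_gt hpe)
      have hcardB : B.card ≤ k := by
        have h1 : C₁.card < S.card := Finset.card_lt_card hC₁ssub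
        have h2 : B.card ≤ C₁.card + 1 := Finset.card_insert_le _ _
        have h3 : S.card = A.card - 1 := Finset.card_erase_of_mem hv
        have h4 : 0 < A.card := Finset.card_pos.2 ⟨v, hv⟩
        omega
      have hIHB := ih B hcardB hconnB z hrootB hubB v hvB
      rw [hBv] at hIHB
      exact absurd hCz (ne_of_gt hIHB)

lemma key (r : Fin n → ℝ) (lam : Fin n → Fin n → ℝ)
    (hsym : ∀ x y, lam x y = lam y x) (hnonpos : ∀ x y, lam x y ≤ 0)
    {A : Finset (Fin n)} (hconn : Conn lam A) {z : ℝ}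
    (hroot : (mu r lam A).IsRoot z) (hub : ∀ x, (mu r lam A).IsRoot x → x ≤ z)
    {v : Fin n} (hv : v ∈ A) : 0 < (mu r lam (A.erase v)).eval z :=
  key_aux r lam hsym hnonpos A.card A le_rfl hconn z hroot hub v hv

end Stmt19

namespace Stmt19
open Finset Polynomial
variable {n : ℕ}

lemma two_del (r : Fin n → ℝ) (lam : Fin n → Fin n → ℝ)
    (hsym : ∀ x y, lam x y = lam y x) (hnonpos : ∀ x y, lam x y ≤ 0)
    (hconn : Conn lam (Finset.univ : Finset (Fin n))) {z : ℝ}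
    (hroot : (mu r lam (Finset.univ : Finset (Fin n))).IsRoot z)
    (hub : ∀ x, (mu r lam (Finset.univ : Finset (Fin n))).IsRoot x → x ≤ z)
    (i j : Fin n) :
    0 < (mu r lam (((Finset.univ : Finset (Fin n)).erase i).erase j)).eval z := by
  set T := (((Finset.univ : Finset (Fin n)).erase i).erase j) with hT
  have hposA : ∀ y, z < y → 0 < (mu r lam (Finset.univ : Finset (Fin n))).eval y := by
    intro y hy
    refine pos_on_ray (mu_monic r lam _) (t := y) (fun x hx hr => ?_) y le_rfl
    exact absurd (hub x hr) (by linarith)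
  have hposSub : ∀ B : Finset (Fin n), ∀ y, z < y → 0 < (mu r lam B).eval y := by
    intro B y hy
    refine pos_subset r lam hsym hnonpos (Finset.univ : Finset (Fin n)).card Finset.univ B
      le_rfl (Finset.subset_univ _) ((z + y) / 2)
      (fun t ht => hposA t (by linarith)) y (by linarith)
  by_contra hc
  push_neg at hc
  have hTz : (mu r lam T).eval z = 0 :=
    le_antisymm hc (eval_nonneg_boundary (fun y hy => hposSub T y hy))
  obtain ⟨a, haT, hCz⟩ := vanish_comp r lam hsym T.card T le_rfl z hTz
  set C₁ := comp lam T a with hC₁def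
  have hC₁T : C₁ ⊆ T := comp_subset
  have hiT : i ∉ T := by
    simp [hT]
  have hiC₁ : i ∉ C₁ := fun h => hiT (hC₁T h)
  obtain ⟨x, hxC₁, y, hyC₁, hstep⟩ :=
    exists_exit (hconn a (Finset.mem_univ a) i (Finset.mem_univ i)) (mem_comp_self haT) hiC₁
  have hyT : y ∉ T := by
    intro hyT
    exact hyC₁ (comp_closed hxC₁ ⟨hC₁T hxC₁, hyT, hstep.2.2⟩)
  have hlamxy : lam x y ≠ 0 := hstep.2.2
  set B := insert y C₁ with hBdef
  have hBy : B.erase y = C₁ := Finset.erase_insert hyC₁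
  have hyB : y ∈ B := Finset.mem_insert_self _ _
  have hxB : x ∈ B := Finset.mem_insert_of_mem hxC₁
  have hreachy : ∀ c ∈ C₁, Reach lam B c y := by
    intro c hcC
    have h1 : Reach lam C₁ c x := comp_conn hsym c hcC x hxC₁
    exact (reach_mono (Finset.subset_insert _ _) h1).tail ⟨hxB, hyB, hlamxy⟩
  have hconnB : Conn lam B := by
    intro u hu w hw
    have hru : Reach lam B u y := by
      rcases Finset.mem_insert.1 hu with rfl | hu'
      · exact Relation.ReflTransGen.refl
      · exact hreachy u hu'
    have hrw : Reach lam B w y := by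
      rcases Finset.mem_insert.1 hw with rfl | hw'
      · exact Relation.ReflTransGen.refl
      · exact hreachy w hw'
    exact hru.trans (reach_symm hsym hrw)
  have hubB : ∀ t, (mu r lam B).IsRoot t → t ≤ z := by
    intro t ht
    by_contra hgt
    push_neg at hgt
    exact absurd ht.eq_zero (ne_of_gt (hposSub B t hgt))
  have hrootB : (mu r lam B).IsRoot z := by
    by_contra hnr
    have hposB : ∀ s, z ≤ s → 0 < (mu r lam B).eval s := by
      intro s hs
      rcases eq_or_lt_of_le hs with heq | hlt
      · have hnn : 0 ≤ (mu r lam B).eval s := by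
          refine eval_nonneg_boundary (fun t ht => hposSub B t ?_)
          rw [heq]
          exact ht
        rcases lt_or_eq_of_le hnn with h | h
        · exact h
        · exact absurd (Polynomial.IsRoot.def.2 h.symm) (heq ▸ hnr)
      · exact hposSub B s hlt
    have hpe := pos_erase r lam hsym hnonpos hyB hposB z le_rfl
    rw [hBy] at hpe
    exact absurd hCz (ne_of_gt hpe)
  have hfin := key r lam hsym hnonpos hconnB hrootB hubB hyB
  rw [hBy] at hfin
  exact absurd hCz (ne_of_gt hfin)

end Stmt19

open Stmt19 in
lemma conn_univ_of_wconn {n : ℕ} (lam : Fin n → Fin n → ℝ)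
    (hsym : ∀ x y, lam x y = lam y x) (h : (wGraph lam).Connected) :
    Conn lam (Finset.univ : Finset (Fin n)) := by
  intro x _ y _
  obtain ⟨w⟩ := h.preconnected x y
  induction w with
  | nil => exact Relation.ReflTransGen.refl
  | @cons u b c hadj p ih =>
    rw [wGraph, SimpleGraph.fromRel_adj] at hadj
    have hub : lam u b ≠ 0 := by
      rcases hadj.2 with h' | h'
      · exact h'
      · rw [hsym]; exact h'
    exact Relation.ReflTransGen.head ⟨Finset.mem_univ _, Finset.mem_univ _, hub⟩ (ih (Finset.mem_univ _) (Finset.mem_univ _))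


open Stmt19 in
/-- if `G` is connected and `G'` is obtained from `G` by replacing the edge
weight `λ_{ij}` with `λ'_{ij}` satisfying `λ_{ij} < λ'_{ij} ≤ 0` (all other weights
unchanged), then the largest root of `μ(G)` is strictly greater than the largest root of
`μ(G')`. -/
theorem stmt_19 (n : ℕ) (hn : 0 < n) (r : Fin n → ℝ) (lam lam' : Fin n → Fin n → ℝ)
    (hsym : ∀ j k, lam j k = lam k j) (hnonpos : ∀ j k, lam j k ≤ 0)
    (hdiag : ∀ i, lam i i = 0) (hconn : (wGraph lam).Connected)
    (i j : Fin n) (hij : i ≠ j)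
    (hsym' : lam' i j = lam' j i)
    (hlt : lam i j < lam' i j) (hle : lam' i j ≤ 0)
    (hother : ∀ a b : Fin n, ¬((a = i ∧ b = j) ∨ (a = j ∧ b = i)) → lam' a b = lam a b)
    (z z' : ℝ)
    (hz : IsGreatest {x : ℝ | (mu r lam (Finset.univ : Finset (Fin n))).IsRoot x} z)
    (hz' : IsGreatest {x : ℝ | (mu r lam' (Finset.univ : Finset (Fin n))).IsRoot x} z') :
    z' < z := by
  classical
  have hconnU : Conn lam (Finset.univ : Finset (Fin n)) := conn_univ_of_wconn lam hsym hconn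
  obtain ⟨a, b, hab, habij, hlab, hlab2⟩ :
      ∃ a b : Fin n, a < b ∧
        (∀ x y : Fin n, ((x = a ∧ y = b) ∨ (x = b ∧ y = a)) ↔
          ((x = i ∧ y = j) ∨ (x = j ∧ y = i))) ∧
        lam' a b - lam a b = lam' i j - lam i j ∧
        (((Finset.univ : Finset (Fin n)).erase a).erase b
          = ((Finset.univ : Finset (Fin n)).erase i).erase j) := by
    rcases lt_or_gt_of_ne hij with h | h
    · exact ⟨i, j, h, fun x y => Iff.rfl, rfl, rfl⟩
    · refine ⟨j, i, h, fun x y => by tauto, ?_, Finset.erase_right_comm⟩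
      rw [hsym j i, ← hsym']
  set p := mu r lam (Finset.univ : Finset (Fin n)) with hpd
  set q := mu r lam' (Finset.univ : Finset (Fin n)) with hqd
  set s := mu r lam (((Finset.univ : Finset (Fin n)).erase i).erase j) with hsd
  have hsp := edge_split r lam hab (Finset.mem_univ a) (Finset.mem_univ b)
  have hsq := edge_split r lam' hab (Finset.mem_univ a) (Finset.mem_univ b)
  have hz0 : zeroAt lam' a b = zeroAt lam a b := by
    funext x y
    unfold zeroAt
    by_cases hcond : (x = a ∧ y = b) ∨ (x = b ∧ y = a)
    · simp [hcond]
    · simp only [if_neg hcond]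
      exact hother x y (fun hcc => hcond ((habij x y).2 hcc))
  have hmuE : mu r lam' (((Finset.univ : Finset (Fin n)).erase a).erase b)
      = mu r lam (((Finset.univ : Finset (Fin n)).erase a).erase b) := by
    refine mu_congr r fun x hx y hy hxy => ?_
    refine hother x y ?_
    intro hcc
    rcases (habij x y).2 hcc with ⟨rfl, _⟩ | ⟨rfl, _⟩
    · exact (Finset.mem_erase.1 (Finset.mem_of_mem_erase hx)).1 rfl
    · exact (Finset.mem_erase.1 hx).1 rfl
  have hsE : s = mu r lam (((Finset.univ : Finset (Fin n)).erase a).erase b) := by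
    rw [hsd, hlab2]
  have hq : q = p + C (lam' i j - lam i j) * s := by
    have h1 : q = (p - C (lam a b) * mu r lam (((Finset.univ : Finset (Fin n)).erase a).erase b))
        + C (lam' a b) * mu r lam (((Finset.univ : Finset (Fin n)).erase a).erase b) := by
      rw [hqd, hsq, hz0, hmuE, hpd]
      congr 1
      rw [hsp]
      ring
    rw [h1, hsE, ← hlab, map_sub]
    ring
  have hδ : 0 < lam' i j - lam i j := by linarith
  have hppos : ∀ y, z < y → 0 < p.eval y := by
    intro y hy
    refine pos_on_ray (mu_monic r lam _) (t := y) (fun t ht hr => ?_) y le_rfl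
    exact absurd (hz.2 hr) (by linarith)
  have hspos : 0 < s.eval z :=
    two_del r lam hsym hnonpos hconnU hz.1 (fun x hx => hz.2 hx) i j
  by_contra hzz
  push_neg at hzz
  have hq'0 : q.eval z' = 0 := hz'.1
  rcases eq_or_lt_of_le hzz with heq | hlt2
  · rw [← heq] at hq'0
    rw [hq] at hq'0
    rw [Polynomial.eval_add, Polynomial.eval_mul, Polynomial.eval_C] at hq'0
    have hp0 : p.eval z = 0 := hz.1
    nlinarith
  · have hp' : 0 < p.eval z' := hppos z' hlt2
    have hs' : 0 < s.eval z' := by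
      refine pos_subset r lam hsym hnonpos (Finset.univ : Finset (Fin n)).card Finset.univ _
        le_rfl (Finset.subset_univ _) ((z + z') / 2)
        (fun t ht => hppos t (by linarith)) z' (by linarith)
    rw [hq, Polynomial.eval_add, Polynomial.eval_mul, Polynomial.eval_C] at hq'0
    nlinarith
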